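/- Uniqueness under randomization (stability): with Ξ₀, P, r as above, let σ be a density operator with support(σ) orthogonal to support(Ξ₀), let q̄ be the maximal eigenvalue of σ, and let ρ = (1−α)P/r + ασ with 0 ≤ α < 1/(1 + r·q̄). Then for every ζ in C (PSD operators with Tr[ζ] = dim H and the minimal-support property for Ξ₀), Tr[ρζ] ≤ (1−α)·dim(H)/r, with equality if and only if ζ = Ξ₀. -/

import Mathlib

open scoped ComplexOrder Matrix

section helpers
variable {m : ℕ}

private lemma myDiagNonneg {A : Matrix (Fin m) (Fin m) ℂ} (hA : A.PosSemidef) (i : Fin m) :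
    0 ≤ A i i := by
  exact hA.diag_nonneg

noncomputable def Matrix.PosSemidef.sqrt {A : Matrix (Fin m) (Fin m) ℂ} (hA : A.PosSemidef) :
    Matrix (Fin m) (Fin m) ℂ :=
  (hA.1.eigenvectorUnitary : Matrix (Fin m) (Fin m) ℂ) *
    Matrix.diagonal (fun i => ((Real.sqrt (hA.1.eigenvalues i) : ℝ) : ℂ)) *
    star (hA.1.eigenvectorUnitary : Matrix (Fin m) (Fin m) ℂ)

lemma Matrix.PosSemidef.posSemidef_sqrt {A : Matrix (Fin m) (Fin m) ℂ} (hA : A.PosSemidef) :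
    hA.sqrt.PosSemidef := by
  unfold Matrix.PosSemidef.sqrt
  rw [Matrix.star_eq_conjTranspose]
  exact (Matrix.posSemidef_diagonal_iff.mpr (fun i => by
    rw [Complex.le_def]; simp [Real.sqrt_nonneg])).mul_mul_conjTranspose_same _

lemma Matrix.PosSemidef.sqrt_mul_self {A : Matrix (Fin m) (Fin m) ℂ} (hA : A.PosSemidef) :
    hA.sqrt * hA.sqrt = A := by
  unfold Matrix.PosSemidef.sqrt
  set U : Matrix (Fin m) (Fin m) ℂ := (hA.1.eigenvectorUnitary : Matrix (Fin m) (Fin m) ℂ)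
  have hU : star U * U = 1 := Matrix.mem_unitaryGroup_iff'.mp hA.1.eigenvectorUnitary.2
  have hD : Matrix.diagonal (fun i => ((Real.sqrt (hA.1.eigenvalues i) : ℝ) : ℂ)) *
      Matrix.diagonal (fun i => ((Real.sqrt (hA.1.eigenvalues i) : ℝ) : ℂ))
      = Matrix.diagonal (RCLike.ofReal ∘ hA.1.eigenvalues) := by
    rw [Matrix.diagonal_mul_diagonal]
    congr 1
    funext i
    simp only [Function.comp_apply, ← Complex.ofReal_mul,
      Real.mul_self_sqrt (hA.eigenvalues_nonneg i)]
    rfl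
  calc U * Matrix.diagonal (fun i => ((Real.sqrt (hA.1.eigenvalues i) : ℝ) : ℂ)) * star U *
        (U * Matrix.diagonal (fun i => ((Real.sqrt (hA.1.eigenvalues i) : ℝ) : ℂ)) * star U)
      = U * (Matrix.diagonal (fun i => ((Real.sqrt (hA.1.eigenvalues i) : ℝ) : ℂ)) *
        (star U * U) * Matrix.diagonal (fun i => ((Real.sqrt (hA.1.eigenvalues i) : ℝ) : ℂ)))
        * star U := by simp only [mul_assoc]
    _ = A := by
      rw [hU, mul_one, hD]
      conv_rhs => rw [hA.1.spectral_theorem, Unitary.conjStarAlgAut_apply]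

private lemma myTraceNonneg {A : Matrix (Fin m) (Fin m) ℂ} (hA : A.PosSemidef) :
    0 ≤ A.trace :=
  Finset.sum_nonneg fun i _ => myDiagNonneg hA i

private lemma myTraceMulNonneg {A B : Matrix (Fin m) (Fin m) ℂ} (hA : A.PosSemidef)
    (hB : B.PosSemidef) : 0 ≤ (A * B).trace := by
  have h1 : (A * B).trace = (hA.sqrt * B * hA.sqrt).trace := by
    conv_lhs => rw [← hA.sqrt_mul_self]
    rw [mul_assoc, Matrix.trace_mul_comm, mul_assoc]
  rw [h1]
  have h2 : (hA.sqrt * B * hA.sqrt).PosSemidef := by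
    have := hB.mul_mul_conjTranspose_same hA.sqrt
    rwa [hA.posSemidef_sqrt.1.eq] at this
  exact myTraceNonneg h2

private lemma myCTtraceZero {A : Matrix (Fin m) (Fin m) ℂ} (h : (Aᴴ * A).trace.re = 0) :
    A = 0 := by
  have hsum : ∑ j, ∑ i, Complex.normSq (A i j) = 0 := by
    rw [← h]
    simp [Matrix.trace, Matrix.diag, Matrix.mul_apply, Complex.normSq_eq_conj_mul_self,
      Complex.re_sum, Complex.normSq_apply]
  ext i j
  have h1 := (Finset.sum_eq_zero_iff_of_nonneg (fun j _ => Finset.sum_nonneg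
    (fun i _ => Complex.normSq_nonneg (A i j)))).mp hsum j (Finset.mem_univ j)
  have h2 := (Finset.sum_eq_zero_iff_of_nonneg (fun i _ => Complex.normSq_nonneg (A i j))).mp
    h1 i (Finset.mem_univ i)
  simpa using Complex.normSq_eq_zero.mp h2

private lemma mySmulOneSub {A : Matrix (Fin m) (Fin m) ℂ} (hA : A.IsHermitian) (q : ℝ)
    (hq : ∀ i, hA.eigenvalues i ≤ q) :
    ((q : ℂ) • (1 : Matrix (Fin m) (Fin m) ℂ) - A).PosSemidef := by
  set U : Matrix (Fin m) (Fin m) ℂ := (hA.eigenvectorUnitary : Matrix (Fin m) (Fin m) ℂ)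
  have hU : U * star U = 1 := Matrix.mem_unitaryGroup_iff.mp hA.eigenvectorUnitary.2
  have hD : (q : ℂ) • (1 : Matrix (Fin m) (Fin m) ℂ) - A
      = U * ((q : ℂ) • (1 : Matrix (Fin m) (Fin m) ℂ)
        - Matrix.diagonal (RCLike.ofReal ∘ hA.eigenvalues)) * star U := by
    rw [Matrix.mul_sub, Matrix.sub_mul]
    rw [Matrix.mul_smul, mul_one, Matrix.smul_mul, hU]
    conv_lhs => rw [hA.spectral_theorem, Unitary.conjStarAlgAut_apply]
  rw [hD]
  have hdiag : ((q : ℂ) • (1 : Matrix (Fin m) (Fin m) ℂ)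
      - Matrix.diagonal (RCLike.ofReal ∘ hA.eigenvalues))
      = Matrix.diagonal (fun i => ((q - hA.eigenvalues i : ℝ) : ℂ)) := by
    ext i j
    by_cases h : i = j <;>
      simp [Matrix.diagonal_apply, Matrix.one_apply, h, Complex.ofReal_sub]
  rw [hdiag, Matrix.star_eq_conjTranspose]
  exact (Matrix.posSemidef_diagonal_iff.mpr (fun i => by
    rw [Complex.le_def]; simp [sub_nonneg, hq i])).mul_mul_conjTranspose_same U

end helpers

/-- Proposition 3 (stability under randomization): with `Ξ₀`, `P`, `r` as in the
uniqueness proposition, let `σ` be a density operator with support orthogonal to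
`supp Ξ₀`, `q̄` its maximal eigenvalue, and `ρ = (1-α) P/r + α σ` with
`0 ≤ α < 1/(1 + r q̄)`.  Then for all `ζ ∈ C`, `Tr[ρ ζ] ≤ (1-α) dim H / r`, with
equality iff `ζ = Ξ₀`. -/
theorem extremal_povm_stmt10 {n : ℕ} (C : Set (Matrix (Fin n) (Fin n) ℂ))
    (hCconv : Convex ℝ C) (hCpsd : ∀ ζ ∈ C, ζ.PosSemidef)
    (hCtr : ∀ ζ ∈ C, ζ.trace = (n : ℂ))
    (Ξ₀ : Matrix (Fin n) (Fin n) ℂ) (hΞ₀ : Ξ₀ ∈ C)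
    (hmin : ∀ ζ ∈ C,
      LinearMap.range (Matrix.toLin' ζ) ≤ LinearMap.range (Matrix.toLin' Ξ₀) → ζ = Ξ₀)
    (P : Matrix (Fin n) (Fin n) ℂ) (hPproj : P * P = P) (hPherm : P.IsHermitian)
    (hPrange : LinearMap.range (Matrix.toLin' P) = LinearMap.range (Matrix.toLin' Ξ₀))
    (r : ℕ) (hr : (r : ℂ) = P.trace) (hrpos : 0 < r)
    (σ : Matrix (Fin n) (Fin n) ℂ) (hσ : σ.PosSemidef) (hσtr : σ.trace = 1)
    (horth : P * σ = 0)
    (qbar : ℝ) (hqbar : IsGreatest {x : ℝ | ∃ i, hσ.1.eigenvalues i = x} qbar)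
    (α : ℝ) (hα0 : 0 ≤ α) (hα1 : α < 1 / (1 + r * qbar))
    (ρ : Matrix (Fin n) (Fin n) ℂ)
    (hρ : ρ = ((1 - α) / r : ℝ) • P + α • σ) :
    ∀ ζ ∈ C, (ρ * ζ).trace.re ≤ (1 - α) * n / r ∧
      ((ρ * ζ).trace.re = (1 - α) * n / r ↔ ζ = Ξ₀) := by
  set Pc : Matrix (Fin n) (Fin n) ℂ := 1 - P with hPc
  have hPcH : Pcᴴ = Pc := by
    simp [hPc, Matrix.conjTranspose_sub, hPherm.eq]
  have hPc2 : Pc * Pc = Pc := by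
    simp [hPc, Matrix.sub_mul, Matrix.mul_sub, hPproj]
  have hσP : σ * P = 0 := by
    have := congrArg Matrix.conjTranspose horth
    simpa [Matrix.conjTranspose_mul, hσ.1.eq, hPherm.eq] using this
  have hσPc : Pc * σ * Pc = σ := by
    simp [hPc, Matrix.sub_mul, Matrix.mul_sub, horth, hσP]
  have hq0 : 0 ≤ qbar := by
    obtain ⟨i, hi⟩ := hqbar.1
    exact hi ▸ hσ.eigenvalues_nonneg i
  have hqle : ∀ i, hσ.1.eigenvalues i ≤ qbar := fun i => hqbar.2 ⟨i, rfl⟩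
  set rR : ℝ := (r : ℝ) with hrRdef
  have hrRpos : 0 < rR := by rw [hrRdef]; exact_mod_cast hrpos
  have hden : (0:ℝ) < 1 + rR * qbar := by nlinarith
  have hαc : α * (1 + rR * qbar) < 1 := by
    rw [lt_div_iff₀ hden] at hα1
    exact hα1
  have hPΞ : P * Ξ₀ = Ξ₀ := by
    apply Matrix.toLin'.injective
    rw [Matrix.toLin'_mul]
    apply LinearMap.ext
    intro x
    have hx : Matrix.toLin' Ξ₀ x ∈ LinearMap.range (Matrix.toLin' P) :=
      hPrange ▸ LinearMap.mem_range_self _ x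
    obtain ⟨y, hy⟩ := hx
    calc Matrix.toLin' P (Matrix.toLin' Ξ₀ x) = Matrix.toLin' P (Matrix.toLin' P y) := by
          rw [hy]
      _ = Matrix.toLin' (P * P) y := by rw [Matrix.toLin'_mul]; rfl
      _ = Matrix.toLin' Ξ₀ x := by rw [hPproj, hy]
  intro ζ hζ
  have hζpsd := hCpsd ζ hζ
  have hζtr := hCtr ζ hζ
  set M : Matrix (Fin n) (Fin n) ℂ := Pc * ζ * Pc with hM
  have hMpsd : M.PosSemidef := by
    have := hζpsd.mul_mul_conjTranspose_same Pc
    rwa [hPcH] at this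
  set t : ℝ := ((Pc * ζ).trace).re with ht
  set s : ℝ := ((σ * ζ).trace).re with hs
  have htM : M.trace = (Pc * ζ).trace := by
    rw [hM, Matrix.trace_mul_comm, ← mul_assoc, hPc2]
  have ht0 : 0 ≤ t := by
    have := myTraceNonneg hMpsd
    rw [htM] at this
    exact (Complex.le_def.mp this).1
  have hsle : s ≤ qbar * t := by
    have h1 : (σ * ζ).trace = (σ * M).trace := by
      conv_lhs => rw [← hσPc]
      rw [mul_assoc, mul_assoc, Matrix.trace_mul_comm, hM]
      rw [mul_assoc, mul_assoc]
    have h2 : 0 ≤ (((qbar : ℂ) • (1 : Matrix (Fin n) (Fin n) ℂ) - σ) * M).trace :=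
      myTraceMulNonneg (mySmulOneSub hσ.1 qbar hqle) hMpsd
    have h3 : ((qbar : ℂ) • (1 : Matrix (Fin n) (Fin n) ℂ) - σ) * M
        = (qbar : ℂ) • M - σ * M := by
      rw [Matrix.sub_mul, Matrix.smul_mul, one_mul]
    rw [h3, Matrix.trace_sub, Matrix.trace_smul] at h2
    have h4 := (Complex.le_def.mp h2).1
    have h5 : ((qbar : ℂ) • M.trace).re = qbar * t := by
      rw [smul_eq_mul, htM, Complex.re_ofReal_mul]
    rw [hs, h1]
    rw [Complex.zero_re, Complex.sub_re, h5] at h4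
    linarith
  have hPζ : (P * ζ).trace.re = (n : ℝ) - t := by
    have hsplit : Pc * ζ = ζ - P * ζ := by
      rw [hPc, Matrix.sub_mul, one_mul]
    have : t = ((n : ℝ)) - (P * ζ).trace.re := by
      rw [ht, hsplit, Matrix.trace_sub, Complex.sub_re, hζtr]
      simp
    linarith
  have hkey : (ρ * ζ).trace.re = ((1 - α) * ((n : ℝ) - t) + α * s * rR) / rR := by
    have hρζ : ρ * ζ = ((1 - α) / rR) • (P * ζ) + α • (σ * ζ) := by
      rw [hρ, Matrix.add_mul, Matrix.smul_mul, Matrix.smul_mul]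
    rw [hρζ, Matrix.trace_add, Matrix.trace_smul, Matrix.trace_smul, Complex.add_re,
      Complex.smul_re, Complex.smul_re, hPζ, ← hs]
    simp only [smul_eq_mul]
    field_simp
  refine ⟨?_, ?_, ?_⟩
  · rw [hkey]
    rw [div_le_div_iff₀ hrRpos hrRpos]
    nlinarith [mul_nonneg ht0 (le_of_lt (by linarith : (0:ℝ) < 1 - α * (1 + rR * qbar))),
      mul_le_mul_of_nonneg_left hsle (mul_nonneg hα0 hrRpos.le)]
  · intro heq
    rw [hkey, div_eq_div_iff hrRpos.ne' hrRpos.ne'] at heq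
    have heq2 : (1 - α) * ((n : ℝ) - t) + α * s * rR = (1 - α) * (n : ℝ) :=
      mul_right_cancel₀ hrRpos.ne' heq
    have htz : t = 0 := by
      have hle : t ≤ 0 := by
        nlinarith [mul_le_mul_of_nonneg_left hsle (mul_nonneg hα0 hrRpos.le)]
      linarith
    have hMt : M.trace.re = 0 := by
      rw [htM, ← ht, htz]
    have hNM : (hζpsd.sqrt * Pc)ᴴ * (hζpsd.sqrt * Pc) = M := by
      rw [Matrix.conjTranspose_mul, hPcH, hζpsd.posSemidef_sqrt.1.eq, hM]
      rw [mul_assoc, ← mul_assoc hζpsd.sqrt hζpsd.sqrt Pc, hζpsd.sqrt_mul_self, ← mul_assoc]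
    have hN0 : hζpsd.sqrt * Pc = 0 := myCTtraceZero (by rw [hNM]; exact hMt)
    have hζPc : ζ * Pc = 0 := by
      calc ζ * Pc = hζpsd.sqrt * (hζpsd.sqrt * Pc) := by
            rw [← mul_assoc, hζpsd.sqrt_mul_self]
        _ = 0 := by rw [hN0, mul_zero]
    have hPcζ : Pc * ζ = 0 := by
      have := congrArg Matrix.conjTranspose hζPc
      simpa [Matrix.conjTranspose_mul, hPcH, hζpsd.1.eq] using this
    have hζP : ζ = P * ζ := by
      have h' := hPcζ
      rw [hPc, Matrix.sub_mul, one_mul] at h'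
      exact sub_eq_zero.mp h'
    apply hmin ζ hζ
    rw [← hPrange]
    have hcomp : Matrix.toLin' ζ = (Matrix.toLin' P).comp (Matrix.toLin' ζ) := by
      rw [← Matrix.toLin'_mul]
      exact congrArg _ hζP
    rw [hcomp]
    exact LinearMap.range_comp_le_range _ _
  · intro h
    have hPcΞ : Pc * Ξ₀ = 0 := by
      rw [hPc, Matrix.sub_mul, one_mul, hPΞ, sub_self]
    have htz : t = 0 := by rw [ht, h, hPcΞ]; simp
    have hσΞ : σ * Ξ₀ = 0 := by
      rw [← hPΞ, ← mul_assoc, hσP, Matrix.zero_mul]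
    have hsz : s = 0 := by rw [hs, h, hσΞ]; simp
    rw [hkey, htz, hsz]
    ring
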